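/- Let (H, a) be a weighted hyperplane arrangement in ℂP^n that is klt and CY. Then H is irreducible: there is no decomposition of H into two nonempty subsets H_1, H_2 together with subspaces L_1, L_2 with L_1 + L_2 = ℂP^n such that every hyperplane of H_1 contains L_1 and every hyperplane of H_2 contains L_2. -/
import Mathlib


open scoped Classical

/-- Codimension of a linear subspace of `ℂ^{n+1}` (equivalently, of the corresponding
projective subspace of `ℂP^n`). -/
noncomputable def codim (n : ℕ) (L : Submodule ℂ (Fin (n + 1) → ℂ)) : ℕ :=
  (n + 1) - Module.finrank ℂ L

/-- `L` is an intersection of members of the arrangement `𝓗` (the empty intersection is `⊤`). -/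
def IsIntersection (n : ℕ) (𝓗 : Finset (Submodule ℂ (Fin (n + 1) → ℂ)))
    (L : Submodule ℂ (Fin (n + 1) → ℂ)) : Prop :=
  ∃ S ⊆ 𝓗, L = S.inf id

/-- The localization `𝓗_L`: hyperplanes of the arrangement containing `L`. -/
noncomputable def localization (n : ℕ) (𝓗 : Finset (Submodule ℂ (Fin (n + 1) → ℂ)))
    (L : Submodule ℂ (Fin (n + 1) → ℂ)) : Finset (Submodule ℂ (Fin (n + 1) → ℂ)) :=
  𝓗.filter fun H => L ≤ H

/-- The arrangement admits a nontrivial splitting `𝓗 = 𝓗₁ ⊎ 𝓗₂` whose centres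
`T₁ = ⨅ 𝓗₁`, `T₂ = ⨅ 𝓗₂` satisfy `T₁ + T₂ = ℂP^n` (linearly, `T₁ ⊔ T₂ = ⊤`). -/
def HasSplitting (n : ℕ) (𝓗 : Finset (Submodule ℂ (Fin (n + 1) → ℂ))) : Prop :=
  ∃ 𝓗₁ 𝓗₂ : Finset (Submodule ℂ (Fin (n + 1) → ℂ)),
    𝓗₁.Nonempty ∧ 𝓗₂.Nonempty ∧ 𝓗 = 𝓗₁ ∪ 𝓗₂ ∧ (𝓗₁.inf id ⊔ 𝓗₂.inf id) = ⊤

/-- `L` is a nonempty proper irreducible intersection subspace of the arrangement: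
the localized arrangement `𝓗_L` admits no nontrivial splitting. -/
noncomputable def IsIrredSubspace (n : ℕ) (𝓗 : Finset (Submodule ℂ (Fin (n + 1) → ℂ)))
    (L : Submodule ℂ (Fin (n + 1) → ℂ)) : Prop :=
  IsIntersection n 𝓗 L ∧ L ≠ ⊥ ∧ L ≠ ⊤ ∧ ¬HasSplitting n (localization n 𝓗 L)

/-- A weighted hyperplane arrangement in `ℂP^n` that is klt and Calabi–Yau is irreducible:
there is no decomposition `𝓗 = 𝓗₁ ∪ 𝓗₂` into two nonempty subsets together with subspaces
`L₁, L₂` with `L₁ + L₂ = ℂP^n` such that every hyperplane of `𝓗₁` contains `L₁` and every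
hyperplane of `𝓗₂` contains `L₂`. -/
theorem stmt_5 (n : ℕ) (𝓗 : Finset (Submodule ℂ (Fin (n + 1) → ℂ)))
    (hhyp : ∀ H ∈ 𝓗, Module.finrank ℂ H = n)
    (a : Submodule ℂ (Fin (n + 1) → ℂ) → ℝ) (ha : ∀ H ∈ 𝓗, 0 < a H)
    (hklt : ∀ L : Submodule ℂ (Fin (n + 1) → ℂ), L ≠ ⊥ → L ≠ ⊤ →
      ∑ H ∈ localization n 𝓗 L, a H < (codim n L : ℝ))
    (hcy : ∑ H ∈ 𝓗, a H = n + 1) :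
    ¬∃ (𝓗₁ 𝓗₂ : Finset (Submodule ℂ (Fin (n + 1) → ℂ)))
        (L₁ L₂ : Submodule ℂ (Fin (n + 1) → ℂ)),
        𝓗₁.Nonempty ∧ 𝓗₂.Nonempty ∧ 𝓗 = 𝓗₁ ∪ 𝓗₂ ∧ L₁ ⊔ L₂ = ⊤ ∧
        (∀ H ∈ 𝓗₁, L₁ ≤ H) ∧ (∀ H ∈ 𝓗₂, L₂ ≤ H) := by
  rintro ⟨𝓗₁, 𝓗₂, L₁, L₂, h1ne, h2ne, hunion, hsup, hc1, hc2⟩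
  have hfr : Module.finrank ℂ (Fin (n + 1) → ℂ) = n + 1 := by
    simpa using Module.finrank_pi (R := ℂ) (ι := Fin (n + 1))
  have hHtop : ∀ H ∈ 𝓗, H ≠ ⊤ := by
    intro H hH heq
    have := hhyp H hH
    rw [heq, finrank_top, hfr] at this
    omega
  obtain ⟨H₁, hH₁⟩ := h1ne
  obtain ⟨H₂, hH₂⟩ := h2ne
  have hH₁𝓗 : H₁ ∈ 𝓗 := hunion ▸ Finset.mem_union_left _ hH₁
  have hH₂𝓗 : H₂ ∈ 𝓗 := hunion ▸ Finset.mem_union_right _ hH₂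
  have hL₁top : L₁ ≠ ⊤ := fun h => hHtop H₁ hH₁𝓗 (top_le_iff.mp (h ▸ hc1 H₁ hH₁))
  have hL₂top : L₂ ≠ ⊤ := fun h => hHtop H₂ hH₂𝓗 (top_le_iff.mp (h ▸ hc2 H₂ hH₂))
  have hL₁bot : L₁ ≠ ⊥ := fun h => hL₂top (by simpa [h] using hsup)
  have hL₂bot : L₂ ≠ ⊥ := fun h => hL₁top (by simpa [h] using hsup)
  have k1 := hklt L₁ hL₁bot hL₁top
  have k2 := hklt L₂ hL₂bot hL₂top
  have hsub : 𝓗 ⊆ localization n 𝓗 L₁ ∪ localization n 𝓗 L₂ := by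
    intro H hH
    have hH' := hH
    rw [hunion] at hH'
    rcases Finset.mem_union.mp hH' with h | h
    · exact Finset.mem_union_left _ (Finset.mem_filter.mpr ⟨hH, hc1 H h⟩)
    · exact Finset.mem_union_right _ (Finset.mem_filter.mpr ⟨hH, hc2 H h⟩)
  have hnn : ∀ H ∈ localization n 𝓗 L₁ ∪ localization n 𝓗 L₂, 0 ≤ a H := by
    intro H hH
    rcases Finset.mem_union.mp hH with h | h <;>
      exact (ha H (Finset.mem_filter.mp h).1).le
  have hsum1 : ∑ H ∈ 𝓗, a H ≤ ∑ H ∈ localization n 𝓗 L₁ ∪ localization n 𝓗 L₂, a H :=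
    Finset.sum_le_sum_of_subset_of_nonneg hsub (fun H h _ => hnn H h)
  have hsum2 : ∑ H ∈ localization n 𝓗 L₁ ∪ localization n 𝓗 L₂, a H ≤
      ∑ H ∈ localization n 𝓗 L₁, a H + ∑ H ∈ localization n 𝓗 L₂, a H := by
    have heq := Finset.sum_union_inter (s₁ := localization n 𝓗 L₁)
      (s₂ := localization n 𝓗 L₂) (f := a)
    have hpos : 0 ≤ ∑ H ∈ localization n 𝓗 L₁ ∩ localization n 𝓗 L₂, a H :=
      Finset.sum_nonneg fun H h =>
        (ha H (Finset.mem_filter.mp (Finset.mem_inter.mp h).1).1).le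
    linarith
  have hr1 : Module.finrank ℂ L₁ ≤ n + 1 := (Submodule.finrank_le L₁).trans hfr.le
  have hr2 : Module.finrank ℂ L₂ ≤ n + 1 := (Submodule.finrank_le L₂).trans hfr.le
  have hdim : n + 1 ≤ Module.finrank ℂ L₁ + Module.finrank ℂ L₂ := by
    have h := Submodule.finrank_sup_add_finrank_inf_eq L₁ L₂
    rw [hsup, finrank_top, hfr] at h
    omega
  have hcodimN : codim n L₁ + codim n L₂ ≤ n + 1 := by
    unfold codim; omega
  have hcodim : (codim n L₁ : ℝ) + (codim n L₂ : ℝ) ≤ (n : ℝ) + 1 := by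
    have := (Nat.cast_le (α := ℝ)).mpr hcodimN
    push_cast at this
    linarith
  linarith
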